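/- For all z, ζ in the open unit disk 𝔻, the biharmonic Green function Γ(z,ζ) = |z-ζ|²·log(|z-ζ|²/|1-z·conj(ζ)|²) + (1-|z|²)(1-|ζ|²) is positive whenever z ≠ ζ (and equals (1-|z|²)² ≥ 0 when z = ζ, interpreting 0·log 0 = 0). -/

import Mathlib

theorem stmt_15 (z ζ : ℂ) (hz : ‖z‖ < 1) (hζ : ‖ζ‖ < 1) (hne : z ≠ ζ) :
    0 < ‖z - ζ‖^2 * Real.log (‖z - ζ‖^2 / ‖1 - z * starRingEnd ℂ ζ‖^2)
        + (1 - ‖z‖^2) * (1 - ‖ζ‖^2) := by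
  set a := ‖z - ζ‖^2 with ha_def
  set b := ‖1 - z * starRingEnd ℂ ζ‖^2 with hb_def
  set c := (1 - ‖z‖^2) * (1 - ‖ζ‖^2) with hc_def
  have ha : 0 < a := by
    have h : z - ζ ≠ 0 := sub_ne_zero.mpr hne
    exact pow_pos (norm_pos_iff.mpr h) 2
  have hc : 0 < c := by
    have h1 : 0 ≤ ‖z‖ := norm_nonneg z
    have h2 : 0 ≤ ‖ζ‖ := norm_nonneg ζ
    have : 0 < 1 - ‖z‖^2 := by nlinarith
    have : 0 < 1 - ‖ζ‖^2 := by nlinarith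
    exact mul_pos (by nlinarith) (by nlinarith)
  have hb : b = a + c := by
    simp only [ha_def, hb_def, hc_def, Complex.sq_norm,
      Complex.normSq_apply, Complex.sub_re, Complex.sub_im,
      Complex.one_re, Complex.one_im, Complex.mul_re, Complex.mul_im,
      Complex.conj_re, Complex.conj_im, RingHom.coe_coe]
    ring
  have hb0 : 0 < b := by linarith
  have hba : 1 < b / a := by rw [lt_div_iff₀ ha]; linarith
  have hlog : Real.log (b / a) < b / a - 1 :=
    Real.log_lt_sub_one_of_pos (by linarith) (ne_of_gt hba)
  have hinv : Real.log (a / b) = - Real.log (b / a) := by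
    rw [← Real.log_inv]
    congr 1
    field_simp
  have hab : a * (b / a) = b := by field_simp
  have : a * Real.log (b / a) < c := by nlinarith
  rw [hinv]
  nlinarith
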